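/- For a word w over an ordered alphabet with |w| > 1, w is a Lyndon word (w < v for every proper non-empty suffix v) if and only if u^∞ < w^∞ for every proper non-empty prefix u of w, where x^∞ denotes the infinite periodic word with period x compared lexicographically. -/

import Mathlib

variable {α : Type*} [LinearOrder α] [Inhabited α]

/-- A Lyndon word: a non-empty word strictly lexicographically smaller than
all its proper non-empty suffixes. -/
def IsLyndon (w : List α) : Prop :=
  w ≠ [] ∧ ∀ v : List α, v ≠ [] → v ≠ w → v <:+ w → List.Lex (· < ·) w v

/-- `wpow x k` is the word `x` repeated `k` times. -/
def wpow (x : List α) (k : ℕ) : List α := (List.replicate k x).flatten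

/-- `infWord x` is the infinite word `x^∞` (junk value if `x = []`). -/
def infWord (x : List α) : ℕ → α := fun i => x.getD (i % x.length) default

/-- Strict lexicographic order on infinite words. -/
def InfLt (f g : ℕ → α) : Prop := ∃ n, (∀ i < n, f i = g i) ∧ f n < g n

/-- The infinite ordering `≺` on non-empty words. -/
def Prec (u v : List α) : Prop :=
  InfLt (infWord u) (infWord v) ∨ (infWord u = infWord v ∧ v.length < u.length)

/-- `u` is strongly less than `v`: they share a common prefix followed by
strictly comparable letters. -/
def StrongLt (u v : List α) : Prop :=
  ∃ (p s t : List α) (a b : α), a < b ∧ u = p ++ a :: s ∧ v = p ++ b :: t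

/-! ### Auxiliary lemmas -/

lemma infWord_lt {x : List α} {i : ℕ} (h : i < x.length) :
    infWord x i = x.getD i default := by
  simp [infWord, Nat.mod_eq_of_lt h]

lemma infWord_add (x : List α) (i : ℕ) :
    infWord x (x.length + i) = infWord x i := by
  simp [infWord, Nat.add_mod_left]

lemma infLt_asymm {f g : ℕ → α} (h1 : InfLt f g) (h2 : InfLt g f) : False := by
  obtain ⟨n, hn, hfn⟩ := h1
  obtain ⟨m, hm, hgm⟩ := h2
  rcases lt_trichotomy n m with h | h | h
  · exact (ne_of_lt hfn) (hm n h).symm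
  · subst h; exact absurd (hfn.trans hgm) (lt_irrefl _)
  · exact (ne_of_lt hgm) (hn m h).symm

lemma infLt_irrefl (f : ℕ → α) : ¬ InfLt f f := fun h => infLt_asymm h h

open Classical in
lemma infLt_trichotomy (f g : ℕ → α) : f = g ∨ InfLt f g ∨ InfLt g f := by
  by_cases h : ∀ i, f i = g i
  · exact Or.inl (funext h)
  · push_neg at h
    right
    have hn : f (Nat.find h) ≠ g (Nat.find h) := Nat.find_spec h
    have hlt : ∀ i < Nat.find h, f i = g i := by
      intro i hi
      by_contra hne
      exact absurd hi (not_lt.mpr (Nat.find_le hne))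
    rcases lt_or_gt_of_ne hn with h' | h'
    · exact Or.inl ⟨_, hlt, h'⟩
    · exact Or.inr ⟨_, fun i hi => (hlt i hi).symm, h'⟩

lemma getD_of_prefix {u w : List α} (h : u <+: w) {i : ℕ} (hi : i < u.length) :
    u.getD i default = w.getD i default := by
  obtain ⟨t, rfl⟩ := h
  rw [List.getD_append _ _ _ _ hi]

lemma lex_cases {l₁ l₂ : List α} (h : List.Lex (· < ·) l₁ l₂) :
    l₁ <+: l₂ ∨ StrongLt l₁ l₂ := by
  induction h with
  | nil => exact Or.inl (List.nil_prefix)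
  | @cons a s t _ ih =>
    rcases ih with h' | ⟨p, s', t', x, y, hxy, rfl, rfl⟩
    · obtain ⟨t', rfl⟩ := h'
      exact Or.inl ⟨t', by simp⟩
    · exact Or.inr ⟨a :: p, s', t', x, y, hxy, rfl, rfl⟩
  | @rel a s b t hab =>
    exact Or.inr ⟨[], s, t, a, b, hab, rfl, rfl⟩

lemma lex_of_prefix {l₁ l₂ : List α} (h : l₁ <+: l₂) (hne : l₁ ≠ l₂) :
    List.Lex (· < ·) l₁ l₂ := by
  obtain ⟨t, rfl⟩ := h
  have ht : t ≠ [] := by rintro rfl; simp at hne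
  obtain ⟨a, t, rfl⟩ := List.exists_cons_of_ne_nil ht
  clear hne
  induction l₁ with
  | nil => exact List.Lex.nil
  | cons b l ih => exact List.Lex.cons ih

lemma period_mod {f : ℕ → α} {k : ℕ} (hk : 0 < k) (hper : ∀ i, f (k + i) = f i) :
    ∀ i, f i = f (i % k) := by
  intro i
  induction i using Nat.strong_induction_on with
  | _ i ih =>
    rcases lt_or_ge i k with h | h
    · rw [Nat.mod_eq_of_lt h]
    · have h1 : i = k + (i - k) := by omega
      have h2 : i % k = (i - k) % k := by
        conv_lhs => rw [h1]
        rw [Nat.add_mod_left]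
      rw [h2, ← ih (i - k) (by omega)]
      conv_lhs => rw [h1]
      exact hper (i - k)

/-- The key combinatorial lemma: if `w` shifted by `k` is infinitely smaller than
`w^∞`, then the length-`k` prefix power `(take k w)^∞` is not smaller than `w^∞`. -/
lemma keyLemma {w : List α} {k : ℕ} (hk : 0 < k) (hkw : k < w.length)
    (hshift : InfLt (fun i => infWord w (k + i)) (infWord w))
    (hpre : InfLt (infWord (w.take k)) (infWord w)) : False := by
  set f := infWord w with hf
  set g := infWord (w.take k) with hg
  obtain ⟨n, hn, hgn⟩ := hpre
  obtain ⟨m, hm, hfm⟩ := hshift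
  simp only at hm hfm
  have hlen : (w.take k).length = k := by simp [min_eq_left hkw.le]
  have hgper : ∀ i, g (k + i) = g i := by
    intro i
    have := infWord_add (w.take k) i
    rwa [hlen] at this
  have hgf : ∀ i, i < k → g i = f i := by
    intro i hi
    rw [hg, hf, infWord_lt (x := w.take k) (by omega), infWord_lt (by omega)]
    exact getD_of_prefix (List.take_prefix k w) (by omega)
  have hnk : k ≤ n := by
    by_contra h
    push_neg at h
    exact (ne_of_lt hgn) (hgf n h)
  rcases lt_trichotomy (k + m) n with h | h | h
  · have h1 : g (k + m) = f (k + m) := hn _ h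
    have h2 : g m = f m := hn _ (by omega)
    have : f (k + m) = f m := by rw [← h1, hgper m, h2]
    exact (ne_of_lt hfm) this
  · have h2 : g m = f m := hn _ (by omega)
    have : g n < g n := by
      calc g n < f n := hgn
        _ = f (k + m) := by rw [h]
        _ < f m := hfm
        _ = g m := h2.symm
        _ = g (k + m) := (hgper m).symm
        _ = g n := by rw [h]
    exact absurd this (lt_irrefl _)
  · have h1 : f (k + (n - k)) = f (n - k) := hm _ (by omega)
    have h2 : k + (n - k) = n := by omega
    have h3 : g (n - k) = f (n - k) := hn _ (by omega)
    rw [h2] at h1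
    have : g n < g n := by
      calc g n < f n := hgn
        _ = f (n - k) := h1
        _ = g (n - k) := h3.symm
        _ = g (k + (n - k)) := (hgper _).symm
        _ = g n := by rw [h2]
    exact absurd this (lt_irrefl _)

/-- A word `w` with `|w| > 1` is a Lyndon word iff `u^∞ < w^∞` for every
proper non-empty prefix `u` of `w`. -/
theorem lyndon_iff_infWord_lt {α : Type*} [LinearOrder α] [Inhabited α]
    (w : List α) (hw : 1 < w.length) :
    IsLyndon w ↔
      ∀ u : List α, u ≠ [] → u ≠ w → u <+: w → InfLt (infWord u) (infWord w) := by
  constructor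
  · rintro ⟨-, hL⟩ u hu hne hupfx
    obtain ⟨v, rfl⟩ := hupfx
    set f := infWord (u ++ v) with hf
    set g := infWord u with hg
    set k := u.length with hk
    set m := v.length with hm
    have hk0 : 0 < k := List.length_pos_iff.mpr hu
    have hv : v ≠ [] := by rintro rfl; simp at hne
    have hm0 : 0 < m := List.length_pos_iff.mpr hv
    have hlenw : (u ++ v).length = k + m := by simp [hk, hm]
    have hvne : v ≠ u ++ v := by
      intro h
      have := congrArg List.length h
      simp only [List.length_append] at this
      have hu0 : u.length = 0 := by omega
      exact hu (List.length_eq_zero_iff.mp hu0)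
    have hLex : List.Lex (· < ·) (u ++ v) v := hL v hv hvne ⟨u, rfl⟩
    -- values of f below |w|
    have hfval : ∀ i, i < k + m → f i = (u ++ v).getD i default := by
      intro i hi
      rw [hf, infWord_lt (by omega : i < (u ++ v).length)]
    have hfvalv : ∀ i, i < m → f (k + i) = v.getD i default := by
      intro i hi
      rw [hfval (k + i) (by omega), List.getD_append_right _ _ _ _ (by omega : u.length ≤ k + i)]
      congr 1
      omega
    rcases lex_cases hLex with hpf | ⟨p, s, t, a, b, hab, hw1, hv1⟩
    · exfalso
      have := hpf.length_le
      rw [hlenw, ← hm] at this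
      omega
    -- StrongLt (u++v) v
    rcases infLt_trichotomy g f with heq | hlt | hgt
    · -- g = f : v is a prefix of w, contradiction
      exfalso
      have hgper : ∀ i, g (k + i) = g i := by
        intro i
        have := infWord_add u i
        rwa [← hk] at this
      have hvw : ∀ i (hi : i < m), v.getD i default = (u ++ v).getD i default := by
        intro i hi
        rw [← hfvalv i hi, ← hfval i (by omega), ← heq, hgper]
      have hveq : v = (u ++ v).take m := by
        apply List.ext_getElem (by rw [List.length_take]; omega)
        intro i h1 h2
        rw [← List.getD_eq_getElem (d := default) _ h1, ← List.getD_eq_getElem (d := default) _ h2,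
          getD_of_prefix (List.take_prefix m (u ++ v)) h2]
        exact hvw i (by omega)
      have hvpfx : v <+: u ++ v := by
        have h' := List.take_prefix m (u ++ v)
        rwa [← hveq] at h'
      exact Std.Asymm.asymm _ _ hLex (lex_of_prefix hvpfx hvne)
    · exact hlt
    · -- InfLt f g : contradiction
      exfalso
      obtain ⟨n, hn, hfn⟩ := hgt
      have hgval : ∀ i, i < k → g i = f i := by
        intro i hi
        rw [hg, hf, infWord_lt (by omega : i < u.length), infWord_lt (by omega : i < (u ++ v).length)]
        exact getD_of_prefix ⟨v, rfl⟩ (by omega)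
      have hnk : k ≤ n := by
        by_contra h
        push_neg at h
        exact (ne_of_lt hfn) (hgval n h).symm
      have hgper : ∀ i, g (k + i) = g i := by
        intro i
        have := infWord_add u i
        rwa [← hk] at this
      have hshift : InfLt (fun i => f (k + i)) f := by
        refine ⟨n - k, fun i hi => ?_, ?_⟩
        · show f (k + i) = f i
          have h1 : f (k + i) = g (k + i) := hn _ (by omega)
          rw [h1, hgper, hn i (by omega)]
        · show f (k + (n - k)) < f (n - k)
          have h1 : k + (n - k) = n := by omega
          rw [h1]
          calc f n < g n := hfn
            _ = g (k + (n - k)) := by rw [h1]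
            _ = g (n - k) := hgper _
            _ = f (n - k) := (hn _ (by omega)).symm
      have hrev : InfLt f (fun i => f (k + i)) := by
        have hjp : p.length < m := by
          have := congrArg List.length hv1
          simp [hm] at this ⊢
          omega
        have hjw : p.length < k + m := by omega
        refine ⟨p.length, fun i hi => ?_, ?_⟩
        · show f i = f (k + i)
          have h1 : f i = p.getD i default := by
            rw [hfval i (by omega), hw1, List.getD_append _ _ _ _ (by omega)]
          have h2 : f (k + i) = p.getD i default := by
            rw [hfvalv i (by omega), hv1, List.getD_append _ _ _ _ (by omega)]
          rw [h1, h2]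
        · show f p.length < f (k + p.length)
          have h1 : f p.length = a := by
            rw [hfval _ hjw, hw1, List.getD_append_right _ _ _ _ (le_refl _)]
            simp
          have h2 : f (k + p.length) = b := by
            rw [hfvalv _ hjp, hv1, List.getD_append_right _ _ _ _ (le_refl _)]
            simp
          rw [h1, h2]
          exact hab
      exact infLt_asymm hshift hrev
  · intro H
    refine ⟨by rintro rfl; simp at hw, ?_⟩
    intro v hv hvw hsfx
    obtain ⟨u, rfl⟩ := hsfx
    set f := infWord (u ++ v) with hf
    set k := u.length with hk
    set m := v.length with hm
    have hm0 : 0 < m := List.length_pos_iff.mpr hv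
    have hu : u ≠ [] := by rintro rfl; simp at hvw
    have hk0 : 0 < k := List.length_pos_iff.mpr hu
    have hlenw : (u ++ v).length = k + m := by simp [hk, hm]
    have hfval : ∀ i, i < k + m → f i = (u ++ v).getD i default := by
      intro i hi
      rw [hf, infWord_lt (by omega : i < (u ++ v).length)]
    have hfvalv : ∀ i, i < m → f (k + i) = v.getD i default := by
      intro i hi
      rw [hfval (k + i) (by omega), List.getD_append_right _ _ _ _ (by omega : u.length ≤ k + i)]
      congr 1
      omega
    have hfper : ∀ i, f (k + m + i) = f i := by
      intro i
      have := infWord_add (u ++ v) i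
      rwa [hlenw] at this
    have hune : u ≠ u ++ v := by
      intro h
      have := congrArg List.length h
      simp only [List.length_append] at this
      have hv0 : v.length = 0 := by omega
      exact hv (List.length_eq_zero_iff.mp hv0)
    have hutake : (u ++ v).take k = u := List.take_left
    have hpreu : InfLt (infWord ((u ++ v).take k)) f := by
      rw [hutake]
      exact H u hu hune ⟨v, rfl⟩
    have htri : List.Lex (· < ·) (u ++ v) v ∨ u ++ v = v ∨ List.Lex (· < ·) v (u ++ v) :=
      trichotomous _ _
    rcases htri with h | h | h
    · exact h
    · exact absurd h.symm hvw
    · exfalso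
      rcases lex_cases h with hpf | ⟨p, s, t, a, b, hab, hv1, hw1⟩
      · -- v is a prefix of u ++ v (border case)
        have hvtake : v = (u ++ v).take m := List.prefix_iff_eq_take.mp hpf
        have hvval : ∀ i, i < m → v.getD i default = (u ++ v).getD i default :=
          fun i hi => getD_of_prefix hpf (by omega)
        rcases infLt_trichotomy f (fun i => f (k + i)) with heq | hlt | hgt
        · -- f has period k, so infWord u = f, contradicting hpreu
          have hper : ∀ i, f (k + i) = f i := fun i => (congrFun heq i).symm
          have hgeqf : infWord ((u ++ v).take k) = f := by
            funext i
            rw [hutake]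
            have h1 : infWord u i = u.getD (i % k) default := by
              simp [infWord, hk]
            have h2 : f i = f (i % k) := period_mod hk0 hper i
            have hik : i % k < k := Nat.mod_lt _ hk0
            rw [h1, h2, hfval _ (by omega : i % k < k + m)]
            exact getD_of_prefix ⟨v, rfl⟩ (by omega : i % k < u.length)
          rw [hgeqf] at hpreu
          exact infLt_irrefl f hpreu
        · -- InfLt f (shift k f): derive InfLt (shift m f) f, contradict via keyLemma at m
          obtain ⟨n, hn, hfn⟩ := hlt
          simp only at hn hfn
          have hnm : m ≤ n := by
            by_contra hc
            push_neg at hc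
            have heqn : f (k + n) = f n := by
              rw [hfvalv n (by omega), hvval n (by omega), ← hfval n (by omega)]
            exact (ne_of_lt hfn) heqn.symm
          have hshift2 : InfLt (fun i => f (m + i)) f := by
            refine ⟨n - m, fun i hi => ?_, ?_⟩
            · show f (m + i) = f i
              have h1 : f (m + i) = f (k + (m + i)) := hn _ (by omega)
              have h2 : k + (m + i) = k + m + i := by omega
              rw [h1, h2, hfper]
            · show f (m + (n - m)) < f (n - m)
              have h1 : m + (n - m) = n := by omega
              have h2 : k + n = k + m + (n - m) := by omega
              rw [h1]
              calc f n < f (k + n) := hfn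
                _ = f (n - m) := by rw [h2, hfper]
          have hprev : InfLt (infWord ((u ++ v).take m)) f := by
            rw [← hvtake]
            exact H v hv hvw hpf
          exact keyLemma hm0 (by omega) hshift2 hprev
        · -- InfLt (shift k f) f: keyLemma at k
          exact keyLemma hk0 (by omega) hgt hpreu
      · -- StrongLt v (u ++ v)
        have hjp : p.length < m := by
          have := congrArg List.length hv1
          simp [hm] at this ⊢
          omega
        have hshift : InfLt (fun i => f (k + i)) f := by
          refine ⟨p.length, fun i hi => ?_, ?_⟩
          · show f (k + i) = f i
            have h1 : f i = p.getD i default := by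
              rw [hfval i (by omega), hw1, List.getD_append _ _ _ _ (by omega)]
            have h2 : f (k + i) = p.getD i default := by
              rw [hfvalv i (by omega), hv1, List.getD_append _ _ _ _ (by omega)]
            rw [h1, h2]
          · show f (k + p.length) < f p.length
            have h1 : f p.length = b := by
              rw [hfval _ (by omega), hw1, List.getD_append_right _ _ _ _ (le_refl _)]
              simp
            have h2 : f (k + p.length) = a := by
              rw [hfvalv _ hjp, hv1, List.getD_append_right _ _ _ _ (le_refl _)]
              simp
            rw [h1, h2]
            exact hab
        exact keyLemma hk0 (by omega) hshift hpreu
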